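/- Label filtering (top-down): Let N be a network model, let u and v be two nodes in the same layer L_j, and write W_x := {w(q) : q a directed path from x to t in N} for a node x, and L↓(x) := ND({w(q) : q a directed path from r to x in N}). Suppose ND(ND(W_u) ∪ ND(W_v)) = ND(W_v), and suppose there are labels ℓ^u ∈ L↓(u) and ℓ^v ∈ L↓(v) with ℓ^v ≻ ℓ^u or ℓ^v = ℓ^u. Then for every directed path p from u to t in N, the vector ℓ^u + w(p) is dominated by ℓ^v + w(p') for some directed path p' from v to t; consequently ND(⋃_{x ∈ L_j} {ℓ + w(q) : ℓ ∈ L↓(x), q a directed path from x to t}) = ND(⋃_{x ∈ L_j} {ℓ + w(q) : ℓ ∈ L'(x), q a directed path from x to t}), where L'(x) = L↓(x) for x ≠ u and L'(u) = L↓(u) \ {ℓ^u}; i.e., removing the label ℓ^u does not change the Pareto frontier P(N). -/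

import Mathlib

open Pointwise

/-- `y` dominates `y'`: componentwise at least as large and not equal. -/
def dominates {K : ℕ} (y y' : Fin K → ℝ) : Prop :=
  (∀ k, y' k ≤ y k) ∧ y ≠ y'

/-- The nondominated subset of `S`. -/
def ND {K : ℕ} (S : Set (Fin K → ℝ)) : Set (Fin K → ℝ) :=
  {y ∈ S | ¬ ∃ y' ∈ S, dominates y' y}

/-- `IsPath tl hd p u v`: the list of arcs `p` forms a directed walk from `u` to `v`. -/
def IsPath {V A : Type*} (tl hd : A → V) : List A → V → V → Prop
  | [], u, v => u = v
  | a :: p, u, v => tl a = u ∧ IsPath tl hd p (hd a) v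

/-- Total weight of a list of arcs. -/
def pathWeight {A : Type*} {K : ℕ} (w : A → Fin K → ℝ) (p : List A) : Fin K → ℝ :=
  (p.map w).sum

/-- A layered-acyclic network model with `n + 1` layers (indexed `1, …, n+1`),
a single root in layer `1`, a single terminal in layer `n+1`, every arc going
from one layer to the next, and `K`-dimensional arc weights. -/
structure Network (V A : Type*) (K : ℕ) where
  tl : A → V
  hd : A → V
  w : A → Fin K → ℝ
  n : ℕ
  layer : V → ℕ
  layer_pos : ∀ v, 1 ≤ layer v
  layer_le : ∀ v, layer v ≤ n + 1
  arc_step : ∀ a, layer (hd a) = layer (tl a) + 1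
  root : V
  terminal : V
  root_layer : layer root = 1
  terminal_layer : layer terminal = n + 1
  root_unique : ∀ v, layer v = 1 → v = root
  terminal_unique : ∀ v, layer v = n + 1 → v = terminal
  layer_nonempty : ∀ j, 1 ≤ j → j ≤ n + 1 → ∃ v, layer v = j

namespace Network

variable {V A : Type*} {K : ℕ}

/-- The set of directed paths from `u` to `v`. -/
def Paths (N : Network V A K) (u v : V) : Set (List A) :=
  {p | IsPath N.tl N.hd p u v}

/-- The set of weights of directed paths from `u` to `v`. -/
def weights (N : Network V A K) (u v : V) : Set (Fin K → ℝ) :=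
  pathWeight N.w '' N.Paths u v

/-- The Pareto frontier of the network. -/
def Pareto (N : Network V A K) : Set (Fin K → ℝ) :=
  ND (N.weights N.root N.terminal)

end Network

lemma dominates_iff {K : ℕ} (y y' : Fin K → ℝ) : dominates y y' ↔ y' < y := by
  constructor
  · rintro ⟨h1, h2⟩
    exact lt_of_le_of_ne (fun k => h1 k) (Ne.symm h2)
  · intro h
    exact ⟨fun k => h.le k, (ne_of_lt h).symm⟩

lemma dom_or_eq_iff {K : ℕ} (y y' : Fin K → ℝ) : (dominates y y' ∨ y = y') ↔ y' ≤ y := by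
  rw [dominates_iff]
  constructor
  · rintro (h | rfl)
    · exact h.le
    · exact le_rfl
  · intro h
    rcases eq_or_lt_of_le h with h | h
    · exact Or.inr h.symm
    · exact Or.inl h

lemma ND_subset' {K : ℕ} (S : Set (Fin K → ℝ)) : ND S ⊆ S := fun _ h => h.1

/-- In a finite set, every element is below some nondominated element. -/
lemma exists_nd_ge {K : ℕ} {S : Set (Fin K → ℝ)} (hS : S.Finite) {y : Fin K → ℝ}
    (hy : y ∈ S) : ∃ z ∈ ND S, y ≤ z := by
  obtain ⟨z, ⟨hzS, hyz⟩, hmax⟩ := Set.Finite.exists_maximalFor id (S ∩ {z | y ≤ z})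
    (hS.inter_of_left _) ⟨y, hy, le_refl y⟩
  refine ⟨z, ⟨hzS, ?_⟩, hyz⟩
  rintro ⟨z', hz'S, hdz⟩
  rw [dominates_iff] at hdz
  exact absurd (hmax ⟨hz'S, hyz.trans hdz.le⟩ hdz.le) (not_le_of_gt hdz)

/-- If `S' ⊆ S` and every element of `S` is below some element of `S'`,
then `ND S = ND S'`. -/
lemma ND_eq_of_cofinal {K : ℕ} {S S' : Set (Fin K → ℝ)} (hsub : S' ⊆ S)
    (hcof : ∀ y ∈ S, ∃ z ∈ S', y ≤ z) : ND S = ND S' := by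
  ext y
  constructor
  · rintro ⟨hyS, hnd⟩
    obtain ⟨z, hzS', hyz⟩ := hcof y hyS
    have hzy : z = y := by
      by_contra h
      exact hnd ⟨z, hsub hzS', (dominates_iff z y).2 (lt_of_le_of_ne hyz (Ne.symm h))⟩
    subst hzy
    exact ⟨hzS', fun ⟨z', hz', hd⟩ => hnd ⟨z', hsub hz', hd⟩⟩
  · rintro ⟨hyS', hnd⟩
    refine ⟨hsub hyS', ?_⟩
    rintro ⟨z, hzS, hd⟩
    rw [dominates_iff] at hd
    obtain ⟨z', hz'S', hzz'⟩ := hcof z hzS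
    exact hnd ⟨z', hz'S', (dominates_iff z' y).2 (lt_of_lt_of_le hd hzz')⟩

lemma isPath_length {V A : Type*} {K : ℕ} (N : Network V A K) :
    ∀ (p : List A) (x y : V), IsPath N.tl N.hd p x y → N.layer y = N.layer x + p.length := by
  intro p
  induction p with
  | nil => rintro x y rfl; simp
  | cons a q ih =>
    rintro x y ⟨rfl, hq⟩
    have := ih (N.hd a) y hq
    rw [this, N.arc_step a]
    simp [List.length_cons]; ring

lemma weights_finite {V A : Type*} [Finite A] {K : ℕ} (N : Network V A K) (x y : V) :
    (N.weights x y).Finite := by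
  apply Set.Finite.image
  have : N.Paths x y ⊆ {l : List A | l.length ≤ N.layer y} := by
    intro p hp
    have := isPath_length N p x y hp
    simp only [Set.mem_setOf_eq]
    omega
  exact (List.finite_length_le A (N.layer y)).subset this

/-- **Label filtering (top-down).**  Let `u ≠ v` be nodes in the same layer with
`ND(ND(W_u) ∪ ND(W_v)) = ND(W_v)`, where `W_x` is the set of weights of `x`–`t` paths,
and let `ℓu ∈ L↓(u)`, `ℓv ∈ L↓(v)` (top-down labels, i.e. the nondominated `r`–`x` path
weights) with `ℓv ≻ ℓu` or `ℓv = ℓu`.  Then every vector `ℓu + w(p)` (for `p` a `u`–`t`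
path) is dominated by (or equal to) some `ℓv + w(p')` with `p'` a `v`–`t` path, and
removing the label `ℓu` from `L↓(u)` does not change the nondominated set obtained by
extending the top-down labels of the layer to the terminal, i.e. the Pareto frontier. -/
theorem label_filtering_top_down {V A : Type*} [Fintype V] [Fintype A] [DecidableEq V]
    {K : ℕ} (N : Network V A K) (u v : V) (huv : u ≠ v)
    (hlayer : N.layer v = N.layer u)
    (hND : ND (ND (N.weights u N.terminal) ∪ ND (N.weights v N.terminal)) =
      ND (N.weights v N.terminal))
    (ℓu ℓv : Fin K → ℝ)
    (hℓu : ℓu ∈ ND (N.weights N.root u)) (hℓv : ℓv ∈ ND (N.weights N.root v))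
    (hdom : dominates ℓv ℓu ∨ ℓv = ℓu) :
    (∀ p ∈ N.Paths u N.terminal, ∃ p' ∈ N.Paths v N.terminal,
        dominates (ℓv + pathWeight N.w p') (ℓu + pathWeight N.w p) ∨
          ℓv + pathWeight N.w p' = ℓu + pathWeight N.w p) ∧
    ND (⋃ x ∈ {x : V | N.layer x = N.layer u},
          ND (N.weights N.root x) + N.weights x N.terminal) =
      ND (⋃ x ∈ {x : V | N.layer x = N.layer u},
          (if x = u then ND (N.weights N.root u) \ {ℓu} else ND (N.weights N.root x)) +
            N.weights x N.terminal) := by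
  have hle : ℓu ≤ ℓv := (dom_or_eq_iff ℓv ℓu).1 hdom
  -- Part 1
  have part1 : ∀ p ∈ N.Paths u N.terminal, ∃ p' ∈ N.Paths v N.terminal,
      dominates (ℓv + pathWeight N.w p') (ℓu + pathWeight N.w p) ∨
        ℓv + pathWeight N.w p' = ℓu + pathWeight N.w p := by
    intro p hp
    have hwp : pathWeight N.w p ∈ N.weights u N.terminal := ⟨p, hp, rfl⟩
    obtain ⟨z1, hz1, hle1⟩ := exists_nd_ge (weights_finite N u N.terminal) hwp
    have hz1T : z1 ∈ ND (N.weights u N.terminal) ∪ ND (N.weights v N.terminal) := Or.inl hz1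
    have hTfin : (ND (N.weights u N.terminal) ∪ ND (N.weights v N.terminal)).Finite :=
      Set.Finite.union
        ((weights_finite N u N.terminal).subset (ND_subset' _))
        ((weights_finite N v N.terminal).subset (ND_subset' _))
    obtain ⟨z, hz, hle2⟩ := exists_nd_ge hTfin hz1T
    rw [hND] at hz
    obtain ⟨p', hp', rfl⟩ := ND_subset' _ hz
    refine ⟨p', hp', (dom_or_eq_iff _ _).2 ?_⟩
    exact add_le_add hle (hle1.trans hle2)
  refine ⟨part1, ?_⟩
  -- Part 2
  apply ND_eq_of_cofinal ?_ ?_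
  · -- subset
    refine Set.iUnion₂_mono fun x hx => ?_
    by_cases hxu : x = u
    · subst hxu
      simp only [if_pos rfl]
      exact Set.add_subset_add_right Set.diff_subset
    · simp only [if_neg hxu]
      exact le_rfl
  · -- cofinal
    rintro y hy
    simp only [Set.mem_iUnion, Set.mem_setOf_eq] at hy
    obtain ⟨x, hx, hy⟩ := hy
    rw [Set.mem_add] at hy
    obtain ⟨ℓ, hℓ, c, hc, rfl⟩ := hy
    by_cases hcase : x = u ∧ ℓ = ℓu
    · obtain ⟨rfl, rfl⟩ := hcase
      obtain ⟨q, hq, rfl⟩ := hc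
      obtain ⟨p', hp', hdp⟩ := part1 q hq
      rw [dom_or_eq_iff] at hdp
      refine ⟨ℓv + pathWeight N.w p', ?_, hdp⟩
      simp only [Set.mem_iUnion, Set.mem_setOf_eq]
      refine ⟨v, hlayer, ?_⟩
      rw [Set.mem_add]
      exact ⟨ℓv, by simp [if_neg huv.symm, hℓv], pathWeight N.w p', ⟨p', hp', rfl⟩, rfl⟩
    · refine ⟨ℓ + c, ?_, le_refl _⟩
      simp only [Set.mem_iUnion, Set.mem_setOf_eq]
      refine ⟨x, hx, ?_⟩
      rw [Set.mem_add]
      refine ⟨ℓ, ?_, c, hc, rfl⟩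
      by_cases hxu : x = u
      · subst hxu
        simp only [if_pos rfl]
        exact ⟨hℓ, fun h => hcase ⟨rfl, h⟩⟩
      · rw [if_neg hxu]; exact hℓ
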